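/- Let k be an even positive integer and let a be a positive integer such that: p = 2a + 1 is prime, p does not divide k, (a + 1) divides k, and every prime factor of a divides k. Then n = a·k/(a+1) is a positive integer satisfying φ(n+k) = 2·φ(n), where φ denotes Euler's totient function. -/
import Mathlib

lemma tot_aux : ∀ a m : ℕ, 0 < m → (∀ p, p.Prime → p ∣ a → p ∣ m) →
    (a * m).totient = a * m.totient := by
  intro a
  induction a using Nat.strong_induction_on with
  | _ a ih =>
    intro m hm hfac
    match a with
    | 0 => simp
    | 1 => simp
    | (b + 2) =>
      set A := b + 2 with hA
      have hA1 : A ≠ 1 := by omega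
      have hq : A.minFac.Prime := Nat.minFac_prime hA1
      obtain ⟨c, hc⟩ := Nat.minFac_dvd A
      have hqm : A.minFac ∣ m := hfac _ hq (Nat.minFac_dvd A)
      have hc_lt : c < A := by
        have h2 : 2 ≤ A.minFac := hq.two_le
        have hcpos : 0 < c := by
          rcases Nat.eq_zero_or_pos c with h | h
          · rw [h, mul_zero] at hc; omega
          · exact h
        calc c < 2 * c := by omega
          _ ≤ A.minFac * c := Nat.mul_le_mul_right c h2
          _ = A := hc.symm
      have hcfac : ∀ p, p.Prime → p ∣ c → p ∣ m := by
        intro p hp hpc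
        exact hfac p hp (hc ▸ Dvd.dvd.mul_left hpc A.minFac)
      calc (A * m).totient = (A.minFac * (c * m)).totient := by rw [← mul_assoc, ← hc]
        _ = A.minFac * (c * m).totient :=
            Nat.totient_mul_of_prime_of_dvd hq (Dvd.dvd.mul_left hqm c)
        _ = A.minFac * (c * m.totient) := by rw [ih c hc_lt m hm hcfac]
        _ = A * m.totient := by rw [← mul_assoc, ← hc]

theorem prime_sequence_construction
    (k a : ℕ) (hk : 0 < k) (hke : Even k) (ha : 0 < a)
    (hp : Nat.Prime (2 * a + 1)) (hpk : ¬ (2 * a + 1) ∣ k)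
    (hdvd : (a + 1) ∣ k)
    (hfac : ∀ p : ℕ, p.Prime → p ∣ a → p ∣ k) :
    0 < a * k / (a + 1) ∧
    Nat.totient (a * k / (a + 1) + k) = 2 * Nat.totient (a * k / (a + 1)) := by
  obtain ⟨m, hm⟩ := hdvd
  have hmpos : 0 < m := by
    rcases Nat.eq_zero_or_pos m with h | h
    · rw [h, mul_zero] at hm; omega
    · exact h
  have hn : a * k / (a + 1) = a * m := by
    rw [hm, mul_comm (a + 1) m, ← mul_assoc, Nat.mul_div_cancel _ (by omega)]
  -- every prime of a divides m
  have hfm : ∀ p, p.Prime → p ∣ a → p ∣ m := by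
    intro p hpp hpa
    have hpk' : p ∣ (a + 1) * m := hm ▸ hfac p hpp hpa
    have hnd : ¬ p ∣ (a + 1) := by
      intro hd
      have h1 : p ∣ 1 := by
        have := Nat.dvd_sub hd hpa
        simpa using this
      exact hpp.one_lt.ne' (Nat.dvd_one.mp h1)
    exact ((Nat.Prime.coprime_iff_not_dvd hpp).mpr hnd).dvd_of_dvd_mul_left hpk'
  have hpm : ¬ (2 * a + 1) ∣ m := fun h => hpk (hm ▸ h.mul_left (a + 1))
  have hcop : Nat.Coprime (2 * a + 1) m := (hp.coprime_iff_not_dvd).mpr hpm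
  have hsum : a * m + k = (2 * a + 1) * m := by rw [hm]; ring
  refine ⟨by rw [hn]; positivity, ?_⟩
  rw [hn, hsum, Nat.totient_mul hcop, Nat.totient_prime hp, tot_aux a m hmpos hfm]
  have : 2 * a + 1 - 1 = 2 * a := by omega
  rw [this]; ring
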